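/- arXiv:2002.00853 — 4 statements merged into one kernel-verified Lean document; each statement's English description precedes it below -/
import Mathlib

section
/- Let X be a connected topological space with at least two points, and suppose there is a point p ∈ X such that X \ {p} is zero-dimensional (has a basis of clopen sets in the subspace topology). If X is a separable metrizable space, this is impossible; i.e., a separable metrizable zero-dimensional space with at least two points cannot become connected by adjoining a single point (within a metrizable space). -/
/-- A separable metrizable zero-dimensional space with at least two points cannot be
made connected by adjoining a single point within a metrizable space: if `Y` is a
separable metric space, `p ∈ Y`, the subspace `Y \ {p}` has at least two points and a
basis of clopen sets, then `Y` is not connected. -/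
theorem stmt_3 {Y : Type*} [MetricSpace Y] [TopologicalSpace.SeparableSpace Y] (p : Y)
    (h2 : ∃ a b : (({p}ᶜ : Set Y)), a ≠ b)
    (B : Set (Set (({p}ᶜ : Set Y))))
    (hB : TopologicalSpace.IsTopologicalBasis B)
    (hclopen : ∀ U ∈ B, IsClopen U) :
    ¬ ConnectedSpace Y := by
  intro hc
  obtain ⟨a, b, hab⟩ := h2
  have hap : (a : Y) ≠ p := a.2
  set ε := dist (a : Y) p with hε
  have hεpos : 0 < ε := dist_pos.mpr hap
  -- open neighborhood of a inside the ball of radius ε/2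
  have hWopen : IsOpen ((Subtype.val : ({p}ᶜ : Set Y) → Y) ⁻¹' Metric.ball (a : Y) (ε / 2)) :=
    Metric.isOpen_ball.preimage continuous_subtype_val
  have haW : a ∈ (Subtype.val : ({p}ᶜ : Set Y) → Y) ⁻¹' Metric.ball (a : Y) (ε / 2) := by
    simp [Metric.mem_ball, half_pos hεpos]
  obtain ⟨U, hUB, haU, hUW⟩ := hB.exists_subset_of_mem_open haW hWopen
  have hUclopen := hclopen U hUB
  -- the image S of U in Y
  set S : Set Y := Subtype.val '' U with hS
  -- every point of S is at distance > ε/2 from p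
  have hfar : ∀ y ∈ S, ε / 2 ≤ dist y p := by
    rintro y ⟨u, hu, rfl⟩
    have h1 : dist (u : Y) (a : Y) < ε / 2 := by
      have := hUW hu
      exact this
    have h2 : ε ≤ dist (a : Y) (u : Y) + dist (u : Y) p := dist_triangle _ _ _
    rw [dist_comm (a : Y)] at h2
    linarith
  -- S is open in Y
  have hcompl : IsOpen ({p}ᶜ : Set Y) := isOpen_compl_singleton
  have hSopen : IsOpen S := hcompl.isOpenMap_subtype_val U hUclopen.2
  -- S is closed in Y
  have hSclosed : IsClosed S := by
    obtain ⟨C, hCclosed, hCU⟩ := isClosed_induced_iff.mp hUclopen.1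
    refine isClosed_of_closure_subset fun y hy => ?_
    have hyC : y ∈ C := by
      have : S ⊆ C := by
        rintro z ⟨u, hu, rfl⟩
        rw [← hCU] at hu
        exact hu
      exact closure_minimal this hCclosed hy
    have hynp : y ≠ p := by
      intro h
      have : y ∈ {z : Y | ε / 2 ≤ dist z p} :=
        closure_minimal hfar (isClosed_le continuous_const (Continuous.dist continuous_id continuous_const)) hy
      rw [h] at this
      simp at this
      linarith
    refine ⟨⟨y, hynp⟩, ?_, rfl⟩
    rw [← hCU]
    exact hyC
  -- contradiction with connectedness
  have := (isClopen_iff.mp ⟨hSclosed, hSopen⟩)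
  rcases this with h | h
  · have : (a : Y) ∈ S := ⟨a, haU, rfl⟩
    rw [h] at this
    exact this
  · have : p ∈ S := h ▸ Set.mem_univ p
    obtain ⟨u, _, hup⟩ := this
    exact u.2 hup
end

section
/- Let f : ℂ → ℂ be any function, let M : ℝ → ℝ, and let R > 0 be such that M^n(R) → ∞ and M^{n+1}(R) − 2 M^n(R) > κ for all n ≥ m (for some fixed m ∈ ℕ and κ > 0). Suppose s ∈ ℂ and ℓ ≥ 0 satisfy |f^{ℓ+n}(s)| ≥ M^n(R) for all n ∈ ℕ, and suppose z₀ ∈ ℂ is such that for every ℓ' ≥ 0 there exists n with |f^{ℓ'+n}(z₀)| < M^n(R). Then there exists n ∈ ℕ with |f^n(s)| > 2|f^n(z₀)| + κ. -/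
/-- Abstract core of Lemma 7: if `s` is fast escaping relative to `(M, R)` and `z₀` is not,
and `M^{n+1}(R) - 2M^n(R) > κ` for all `n ≥ m` with `M^n(R) → ∞`, then for some `n`,
`|f^n(s)| > 2|f^n(z₀)| + κ`. -/
theorem stmt_7 (f : ℂ → ℂ) (M : ℝ → ℝ) (R κ : ℝ) (m : ℕ)
    (hR : 0 < R) (hκ : 0 < κ)
    (htend : Filter.Tendsto (fun n : ℕ => M^[n] R) Filter.atTop Filter.atTop)
    (hgap : ∀ n : ℕ, m ≤ n → M^[n + 1] R - 2 * M^[n] R > κ)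
    (s : ℂ) (ℓ : ℕ)
    (hs : ∀ n : ℕ, M^[n] R ≤ ‖f^[ℓ + n] s‖)
    (z₀ : ℂ)
    (hz : ∀ ℓ' : ℕ, ∃ n : ℕ, ‖f^[ℓ' + n] z₀‖ < M^[n] R) :
    ∃ n : ℕ, ‖f^[n] s‖ > 2 * ‖f^[n] z₀‖ + κ := by
  -- N₀ : beyond it the iterates are nonnegative
  obtain ⟨N₀, hN₀⟩ := (htend.eventually_ge_atTop 0).exists_forall_of_atTop
  set N := max N₀ m with hN
  -- monotonicity beyond N
  have hmono : ∀ a b : ℕ, N ≤ a → a ≤ b → M^[a] R ≤ M^[b] R := by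
    intro a b ha hab
    induction b with
    | zero =>
      have : a = 0 := Nat.le_zero.mp hab
      simp [this]
    | succ b ih =>
      rcases Nat.lt_or_ge a (b + 1) with h | h
      · have hb : a ≤ b := Nat.lt_succ_iff.mp h
        have h1 : M^[b] R ≥ 0 := hN₀ b (le_trans (le_trans (le_max_left _ _) ha) hb)
        have h2 := hgap b (le_trans (le_trans (le_max_right _ _) ha) hb)
        have : M^[b] R ≤ M^[b+1] R := by nlinarith
        exact le_trans (ih hb) this
      · have : a = b + 1 := le_antisymm hab h
        simp [this]
  -- bound the first N iterates
  set C := (Finset.range (N + 1)).sup' (by simp) (fun n => M^[n] R) with hC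
  have hCle : ∀ n : ℕ, n ≤ N → M^[n] R ≤ C := by
    intro n hn
    exact Finset.le_sup' (fun n => M^[n] R) (Finset.mem_range.mpr (by omega))
  -- K : beyond it the iterates exceed 2C + κ
  obtain ⟨K₀, hK₀⟩ := (htend.eventually_ge_atTop (2 * C + κ + 1)).exists_forall_of_atTop
  set K := max K₀ (N + 1) with hK
  obtain ⟨n, hn⟩ := hz (ℓ + K)
  refine ⟨ℓ + (K + n), ?_⟩
  have hs' := hs (K + n)
  have hn' : ‖f^[ℓ + (K + n)] z₀‖ < M^[n] R := by
    rwa [← Nat.add_assoc]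
  have key : M^[K + n] R > 2 * M^[n] R + κ := by
    rcases Nat.lt_or_ge n N with h | h
    · have h1 : M^[n] R ≤ C := hCle n (le_of_lt h)
      have h2 : M^[K + n] R ≥ 2 * C + κ + 1 := hK₀ (K + n) (le_trans (le_max_left _ _) (Nat.le_add_right _ _))
      linarith
    · have hm : m ≤ n := le_trans (le_trans (le_max_right _ _) h) (le_refl _)
      have h2 := hgap n hm
      have h3 : M^[n + 1] R ≤ M^[K + n] R := by
        apply hmono _ _ (by omega) (by omega)
      linarith
  calc ‖f^[ℓ + (K + n)] s‖ ≥ M^[K + n] R := hs'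
    _ > 2 * M^[n] R + κ := key
    _ > 2 * ‖f^[ℓ + (K + n)] z₀‖ + κ := by linarith
end

section
/- Let J ⊆ ℂ be a closed set, z₀ ∈ J, and U a bounded open subset of ℂ with z₀ ∈ U. Suppose V is an open subset of ℂ with z₀ ∈ V, and (O_n) is a decreasing sequence of open sets with z₀ ∈ O_n for all n, such that ⋂_n closure(O_n) ∩ J equals the connected component C of z₀ in J, each frontier ∂O_n is disjoint from J, the frontier ∂V meets J only in a set A, and C ∩ ∂U ∩ closure(V) = ∅. Then there exists n such that closure(O_n) ∩ closure(V) ∩ ∂U ∩ J = ∅, and for this n the set O_n ∩ V ∩ U ∩ (J \ A) is clopen in the subspace J \ A, contains z₀ (provided z₀ ∉ A), and is contained in U. -/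
/-- Combinatorial core of the main theorem: given the closed set `J`, the bounded open
neighborhood `U` of `z₀`, the open set `V`, and the decreasing sequence `Oseq` of open
sets whose closures intersect down to the connected component `C` of `z₀` in `J`, there is
`n` with `closure (Oseq n) ∩ closure V ∩ frontier U ∩ J = ∅`, and then
`Oseq n ∩ V ∩ U ∩ (J \ A)` is a clopen subset of `J \ A` containing `z₀` and contained in `U`. -/
theorem stmt_16 (J : Set ℂ) (hJ : IsClosed J) (z₀ : ℂ) (hz₀ : z₀ ∈ J)
    (U : Set ℂ) (hUo : IsOpen U) (hUb : Bornology.IsBounded U) (hz₀U : z₀ ∈ U)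
    (V : Set ℂ) (hVo : IsOpen V) (hz₀V : z₀ ∈ V)
    (A : Set ℂ) (hz₀A : z₀ ∉ A)
    (Oseq : ℕ → Set ℂ) (hOo : ∀ n, IsOpen (Oseq n))
    (hOdec : ∀ n, Oseq (n + 1) ⊆ Oseq n) (hz₀O : ∀ n, z₀ ∈ Oseq n)
    (C : Set ℂ)
    (hC : C = Subtype.val '' connectedComponent (⟨z₀, hz₀⟩ : J))
    (hOC : (⋂ n, closure (Oseq n)) ∩ J = C)
    (hOfr : ∀ n, frontier (Oseq n) ∩ J = ∅)
    (hVfr : frontier V ∩ J ⊆ A)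
    (hCU : C ∩ frontier U ∩ closure V = ∅) :
    ∃ n : ℕ, closure (Oseq n) ∩ closure V ∩ frontier U ∩ J = ∅ ∧
      IsClopen ((Subtype.val ⁻¹' (Oseq n ∩ V ∩ U) : Set (J \ A : Set ℂ))) ∧
      z₀ ∈ Oseq n ∩ V ∩ U ∩ (J \ A) ∧
      Oseq n ∩ V ∩ U ∩ (J \ A) ⊆ U := by

  -- The compact decreasing family argument.
  have hAnti : Antitone Oseq := antitone_nat_of_succ_le hOdec
  have hs : IsCompact (closure V ∩ frontier U ∩ J) := by
    apply Metric.isCompact_of_isClosed_isBounded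
    · exact (isClosed_closure.inter isClosed_frontier).inter hJ
    · exact (hUb.closure.subset frontier_subset_closure).subset
        (fun x hx => hx.1.2)
  have hst : (closure V ∩ frontier U ∩ J) ∩ ⋂ n, closure (Oseq n) = ∅ := by
    rw [Set.eq_empty_iff_forall_notMem]
    rintro x ⟨⟨⟨hxV, hxU⟩, hxJ⟩, hxO⟩
    have hxC : x ∈ C := by rw [← hOC]; exact ⟨hxO, hxJ⟩
    have : x ∈ C ∩ frontier U ∩ closure V := ⟨⟨hxC, hxU⟩, hxV⟩
    rw [hCU] at this; exact this
  have hdt : Directed (· ⊇ ·) (fun n => closure (Oseq n)) := by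
    intro m n
    exact ⟨max m n, closure_mono (hAnti (le_max_left m n)),
      closure_mono (hAnti (le_max_right m n))⟩
  obtain ⟨n, hn0⟩ := hs.elim_directed_family_closed (fun n => closure (Oseq n))
    (fun n => isClosed_closure) hst hdt
  have hn : closure (Oseq n) ∩ closure V ∩ frontier U ∩ J = ∅ := by
    rw [Set.eq_empty_iff_forall_notMem] at hn0 ⊢
    intro x hx
    exact hn0 x ⟨⟨⟨hx.1.1.2, hx.1.2⟩, hx.2⟩, hx.1.1.1⟩
  refine ⟨n, hn, ?_, ⟨⟨⟨hz₀O n, hz₀V⟩, hz₀U⟩, hz₀, hz₀A⟩, fun x hx => hx.1.2⟩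
  have key : ∀ z ∈ closure (Oseq n ∩ V ∩ U), z ∈ J → z ∉ A → z ∈ Oseq n ∩ V ∩ U := by
    intro z hz hzJ hzA
    have h1 : z ∈ closure (Oseq n) := closure_mono (fun y hy => hy.1.1) hz
    have h2 : z ∈ closure V := closure_mono (fun y hy => hy.1.2) hz
    have h3 : z ∈ closure U := closure_mono (fun y hy => hy.2) hz
    have hO : z ∈ Oseq n := by
      by_contra h
      have hfr : z ∈ frontier (Oseq n) := by
        rw [frontier, (hOo n).interior_eq]; exact ⟨h1, h⟩
      have : z ∈ frontier (Oseq n) ∩ J := ⟨hfr, hzJ⟩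
      rw [hOfr n] at this; exact this
    have hV : z ∈ V := by
      by_contra h
      refine hzA (hVfr ⟨?_, hzJ⟩)
      rw [frontier, hVo.interior_eq]; exact ⟨h2, h⟩
    have hU : z ∈ U := by
      by_contra h
      have hfr : z ∈ frontier U := by
        rw [frontier, hUo.interior_eq]; exact ⟨h3, h⟩
      have : z ∈ closure (Oseq n) ∩ closure V ∩ frontier U ∩ J := ⟨⟨⟨h1, h2⟩, hfr⟩, hzJ⟩
      rw [hn] at this; exact this
    exact ⟨⟨hO, hV⟩, hU⟩
  constructor
  · have heq : (Subtype.val ⁻¹' (Oseq n ∩ V ∩ U) : Set (J \ A : Set ℂ)) =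
        Subtype.val ⁻¹' closure (Oseq n ∩ V ∩ U) := by
      ext x
      exact ⟨fun h => subset_closure h, fun h => key x h x.2.1 x.2.2⟩
    rw [heq]
    exact isClosed_closure.preimage continuous_subtype_val
  · exact (((hOo n).inter hVo).inter hUo).preimage continuous_subtype_val
end

section
/- Suppose X ⊆ ℂ is a G_δ subset of ℂ, X is contained in a closed set J ⊆ ℂ, both X and J \ X are dense in J, and X is zero-dimensional and nonempty. Then X is homeomorphic to the space of irrational numbers. -/
open Set Metric Topology TopologicalSpace

/-- A Gδ set with nonempty complement in a complete second-countable metric space is Polish. -/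
lemma aux_polish_of_isGδ {α : Type*} [MetricSpace α] [CompleteSpace α]
    [SecondCountableTopology α] {s : Set α} (hs : IsGδ s) (hcne : sᶜ.Nonempty) :
    PolishSpace s := by
  obtain ⟨c, hc⟩ := hcne
  obtain ⟨U, hUopen, hsU⟩ := isGδ_iff_eq_iInter_nat.1 hs
  set V : ℕ → Set α := fun n => U n \ {c} with hV
  have hVopen : ∀ n, IsOpen (V n) := fun n => (hUopen n).sdiff isClosed_singleton
  have hsV : s = ⋂ n, V n := by
    rw [hsU]
    ext x
    simp only [mem_iInter, hV, mem_diff, mem_singleton_iff]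
    constructor
    · intro h n
      refine ⟨h n, ?_⟩
      rintro rfl
      exact hc (by rw [hsU]; exact mem_iInter.2 h)
    · intro h n
      exact (h n).1
  have hVc : ∀ n, (V n)ᶜ.Nonempty := fun n => ⟨c, fun h => h.2 rfl⟩
  have hmem : ∀ x ∈ s, ∀ n, 0 < infDist x (V n)ᶜ := by
    intro x hx n
    refine ((hVopen n).isClosed_compl.notMem_iff_infDist_pos (hVc n)).1 ?_
    rw [notMem_compl_iff]
    rw [hsV] at hx
    exact mem_iInter.1 hx n
  set F : s → α × (ℕ → ℝ) := fun x => (x.1, fun n => (infDist x.1 (V n)ᶜ)⁻¹) with hF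
  have hFcont : Continuous F := by
    refine continuous_prodMk.2 ⟨continuous_subtype_val, continuous_pi fun n => ?_⟩
    refine Continuous.inv₀ ?_ ?_
    · exact (continuous_infDist_pt _).comp continuous_subtype_val
    · exact fun x => (hmem x.1 x.2 n).ne'
  have hFemb : Topology.IsEmbedding F :=
    Topology.IsEmbedding.of_comp hFcont continuous_fst Topology.IsEmbedding.subtypeVal
  have hFrange : IsClosed (range F) := by
    have hkey : range F = ⋂ n, {p : α × (ℕ → ℝ) | p.2 n * infDist p.1 (V n)ᶜ = 1} := by
      ext p
      simp only [mem_range, mem_iInter, mem_setOf_eq]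
      constructor
      · rintro ⟨x, rfl⟩ n
        exact inv_mul_cancel₀ (hmem x.1 x.2 n).ne'
      · intro h
        have hpos : ∀ n, 0 < infDist p.1 (V n)ᶜ := by
          intro n
          rcases (infDist_nonneg (x := p.1) (s := (V n)ᶜ)).lt_or_eq with h' | h'
          · exact h'
          · exfalso; have := h n; rw [← h', mul_zero] at this; norm_num at this
        have hps : p.1 ∈ s := by
          rw [hsV, mem_iInter]
          intro n
          by_contra hn
          have : infDist p.1 (V n)ᶜ = 0 := infDist_zero_of_mem (mem_compl hn)
          exact (hpos n).ne' this
        refine ⟨⟨p.1, hps⟩, ?_⟩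
        rw [hF]
        ext1
        · rfl
        · funext n
          have := h n
          have hd := (hpos n).ne'
          field_simp
          rw [eq_comm, ← this]
          try ring
    rw [hkey]
    refine isClosed_iInter fun n => isClosed_eq ?_ continuous_const
    exact ((continuous_apply n).comp continuous_snd).mul
      ((continuous_infDist_pt _).comp continuous_fst)
  exact (Topology.IsClosedEmbedding.mk hFemb hFrange).polishSpace

lemma aux_nowhere_compact {α : Type*} [TopologicalSpace α] [T2Space α] {S J : Set α}
    (hSJ : S ⊆ J) (hcd : J ⊆ closure (J \ S)) (hd : J ⊆ closure S)
    {K : Set S} (hK : IsCompact K) (hKo : IsOpen K) (hKne : K.Nonempty) : False := by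
  obtain ⟨O, hOopen, hKO⟩ := isOpen_induced_iff.1 hKo
  set T : Set α := Subtype.val '' K with hT
  have hTcpt : IsCompact T := hK.image continuous_subtype_val
  have hTclosed : IsClosed T := hTcpt.isClosed
  have hTS : T ⊆ S := by rintro _ ⟨x, _, rfl⟩; exact x.2
  have hTeq : T = O ∩ S := by
    rw [hT, ← hKO, Subtype.image_preimage_coe, Set.inter_comm]
  have hJO : J ∩ O ⊆ T := by
    rintro y ⟨hyJ, hyO⟩
    have h1 : y ∈ closure (O ∩ S) := hOopen.inter_closure ⟨hyO, hd hyJ⟩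
    rw [← hTeq, hTclosed.closure_eq] at h1
    exact h1
  obtain ⟨x, hx⟩ := hKne
  have hxT : (x : α) ∈ T := ⟨x, hx, rfl⟩
  have hxO : (x : α) ∈ O := (hTeq ▸ hxT).1
  have hxJ : (x : α) ∈ J := hSJ x.2
  have hxcl : (x : α) ∈ closure (J \ S) := hcd hxJ
  obtain ⟨z, hzO, hzJS⟩ := mem_closure_iff.1 hxcl O hOopen hxO
  exact hzJS.2 (hTS (hJO ⟨hzJS.1, hzO⟩))

lemma aux_split {α : Type*} [MetricSpace α] [CompleteSpace α] [SecondCountableTopology α]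
    {B : Set (Set α)} (hB : IsTopologicalBasis B) (hclopen : ∀ W ∈ B, IsClopen W)
    (hnc : ∀ K : Set α, IsCompact K → IsOpen K → K = ∅)
    {U : Set α} (hU : IsClopen U) (hUne : U.Nonempty) {ε : ℝ} (hε : 0 < ε) :
    ∃ V : ℕ → Set α, (∀ n, IsClopen (V n)) ∧ (∀ n, (V n).Nonempty) ∧ (∀ n, V n ⊆ U) ∧
      Pairwise (Function.onFun Disjoint V) ∧ (⋃ n, V n) = U ∧
      ∀ n, EMetric.diam (V n) ≤ ENNReal.ofReal ε := by
  classical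
  -- U is not compact
  have hUnc : ¬ IsCompact U := fun h => hUne.ne_empty (hnc U h hU.isOpen)
  have hUtb : ¬ TotallyBounded U := fun h =>
    hUnc (isCompact_iff_totallyBounded_isComplete.2 ⟨h, hU.isClosed.isComplete⟩)
  rw [Metric.totallyBounded_iff] at hUtb
  push_neg at hUtb
  obtain ⟨δ, hδpos, hδ⟩ := hUtb
  set r : ℝ := min (ε / 2) (δ / 2) with hrdef
  have hr : 0 < r := lt_min (by linarith) (by linarith)
  -- basis sets around each point
  have hex : ∀ x : U, ∃ W ∈ B, (x : α) ∈ W ∧ W ⊆ ball (x : α) r ∩ U :=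
    fun x => hB.exists_subset_of_mem_open ⟨mem_ball_self hr, x.2⟩ (isOpen_ball.inter hU.isOpen)
  choose W hWB hWmem hWsub using hex
  -- countable subcover
  obtain ⟨T, hTcount, hTU⟩ := isOpen_iUnion_countable W fun x => (hclopen _ (hWB x)).isOpen
  have hUsub : U ⊆ ⋃ x, W x := fun y hy => mem_iUnion.2 ⟨⟨y, hy⟩, hWmem ⟨y, hy⟩⟩
  have hTne : T.Nonempty := by
    rcases hUne with ⟨y, hy⟩
    rcases eq_empty_or_nonempty T with rfl | h
    · exfalso
      have := hUsub hy
      rw [← hTU] at this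
      simpa using this
    · exact h
  obtain ⟨g, hg⟩ := hTcount.exists_eq_range hTne
  set Wn : ℕ → Set α := fun n => W (g n) with hWn
  have hWnclopen : ∀ n, IsClopen (Wn n) := fun n => hclopen _ (hWB _)
  have hWnsub : ∀ n, Wn n ⊆ ball ((g n : ↑U) : α) r ∩ U := fun n => hWsub _
  have hUcover : U ⊆ ⋃ n, Wn n := by
    intro y hy
    have h1 : y ∈ ⋃ i ∈ T, W i := by rw [hTU]; exact hUsub hy
    rw [hg] at h1
    simpa [hWn] using h1
  have hWnU : ∀ n, Wn n ⊆ U := fun n => (hWnsub n).trans inter_subset_right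
  -- disjointify
  set D : ℕ → Set α := disjointed Wn with hD
  have hDclopen : ∀ n, IsClopen (D n) := by
    have hps : ∀ n, IsClopen ((partialSups Wn n : Set α)) := by
      intro n
      induction n with
      | zero => simpa using hWnclopen 0
      | succ n ih =>
        rw [partialSups_add_one]
        exact ih.union (hWnclopen (n + 1))
    intro n
    cases n with
    | zero => simpa [hD, disjointed_zero] using hWnclopen 0
    | succ n =>
      rw [hD, disjointed_add_one]
      exact (hWnclopen (n + 1)).diff (hps n)
  have hDdisj : Pairwise (Function.onFun Disjoint D) := disjoint_disjointed Wn
  have hDsub : ∀ n, D n ⊆ Wn n := disjointed_subset Wn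
  have hDU : (⋃ n, D n) = U := by
    rw [hD, iUnion_disjointed]
    exact subset_antisymm (iUnion_subset hWnU) hUcover
  have hDdiam : ∀ n, EMetric.diam (D n) ≤ ENNReal.ofReal ε := by
    intro n
    refine EMetric.diam_le fun x hx y hy => ?_
    have hx' := ((hDsub n).trans (hWnsub n)) hx
    have hy' := ((hDsub n).trans (hWnsub n)) hy
    rw [edist_dist]
    refine ENNReal.ofReal_le_ofReal ?_
    have h1 : dist x ((g n : ↑U) : α) < r := hx'.1
    have h2 : dist y ((g n : ↑U) : α) < r := hy'.1
    have := dist_triangle x ((g n : ↑U) : α) y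
    rw [dist_comm ((g n : ↑U) : α) y] at this
    have hrε : r ≤ ε / 2 := min_le_left _ _
    linarith
  -- infinitely many nonempty pieces
  set N : Set ℕ := {n | (D n).Nonempty} with hN
  have hNinf : N.Infinite := by
    intro hNfin
    choose y hy using fun n : N => n.2
    haveI := hNfin.to_subtype
    refine hδ (range y) (Set.finite_range y) ?_
    · intro z hz
      have hz' : z ∈ ⋃ n, D n := hDU.symm ▸ hz
      obtain ⟨n, hn⟩ := mem_iUnion.1 hz'
      have hnN : n ∈ N := ⟨z, hn⟩
      refine mem_biUnion (mem_range_self (⟨n, hnN⟩ : N)) ?_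
      have hz2 := ((hDsub n).trans (hWnsub n)) hn
      have hy2 := ((hDsub n).trans (hWnsub n)) (hy ⟨n, hnN⟩)
      have h1 : dist z ((g n : ↑U) : α) < r := hz2.1
      have h2 : dist (y ⟨n, hnN⟩) ((g n : ↑U) : α) < r := hy2.1
      have := dist_triangle z ((g n : ↑U) : α) (y ⟨n, hnN⟩)
      rw [dist_comm ((g n : ↑U) : α) _] at this
      have hrδ : r ≤ δ / 2 := min_le_right _ _
      rw [mem_ball]
      linarith
  haveI : Infinite N := hNinf.to_subtype
  have e : ℕ ≃ N := (nonempty_equiv_of_countable).some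
  refine ⟨fun n => D (e n), fun n => hDclopen _, fun n => (e n).2, fun n => (hDsub _).trans (hWnU _),
    ?_, ?_, fun n => hDdiam _⟩
  · intro m n hmn
    exact hDdisj (fun h => hmn (e.injective (Subtype.val_injective h)))
  · rw [← hDU]
    apply subset_antisymm (iUnion_subset fun n => subset_iUnion D (e n))
    intro z hz
    obtain ⟨n, hn⟩ := mem_iUnion.1 hz
    have hnN : n ∈ N := ⟨z, hn⟩
    exact mem_iUnion.2 ⟨e.symm ⟨n, hnN⟩, by simpa using hn⟩

lemma aux_homeo_nat_nat (α : Type*) [TopologicalSpace α] [PolishSpace α] [Nonempty α]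
    {B : Set (Set α)} (hB : IsTopologicalBasis B) (hclopen : ∀ W ∈ B, IsClopen W)
    (hnc : ∀ K : Set α, IsCompact K → IsOpen K → K = ∅) :
    Nonempty (α ≃ₜ (ℕ → ℕ)) := by
  classical
  letI := upgradeIsCompletelyMetrizable α
  -- the child-choosing function
  have key : ∀ (p : {U : Set α // IsClopen U ∧ U.Nonempty}) (n : ℕ),
      ∃ V : ℕ → {U : Set α // IsClopen U ∧ U.Nonempty}, (∀ a, (V a).1 ⊆ p.1) ∧
        (Pairwise fun a b => Disjoint (V a).1 (V b).1) ∧ (⋃ a, (V a).1) = p.1 ∧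
        ∀ a, EMetric.diam (V a).1 ≤ ENNReal.ofReal ((1/2 : ℝ)^n) := by
    intro p n
    obtain ⟨V, h1, h2, h3, h4, h5, h6⟩ :=
      aux_split hB hclopen hnc p.2.1 p.2.2 (pow_pos (by norm_num : (0:ℝ) < 1/2) n)
    exact ⟨fun a => ⟨V a, h1 a, h2 a⟩, h3, h4, h5, h6⟩
  choose child hchild1 hchild2 hchild3 hchild4 using key
  set G : List ℕ → {U : Set α // IsClopen U ∧ U.Nonempty} :=
    fun l => l.rec ⟨univ, isClopen_univ, univ_nonempty⟩ (fun a l ih => child ih l.length a)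
    with hG
  set A : List ℕ → Set α := fun l => (G l).1 with hA
  have hcons : ∀ (a : ℕ) (l : List ℕ), G (a :: l) = child (G l) l.length a := fun a l => rfl
  have hAclopen : ∀ l, IsClopen (A l) := fun l => (G l).2.1
  have hAne : ∀ l, (A l).Nonempty := fun l => (G l).2.2
  have hsub : ∀ (a : ℕ) (l : List ℕ), A (a :: l) ⊆ A l := fun a l => hchild1 (G l) l.length a
  have hanti : CantorScheme.Antitone A := fun l a => hsub a l
  have hclanti : CantorScheme.ClosureAntitone A :=
    hanti.closureAntitone fun l => (hAclopen l).isClosed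
  have hdisj : CantorScheme.Disjoint A := fun l => hchild2 (G l) l.length
  have hcover : ∀ l : List ℕ, (⋃ a, A (a :: l)) = A l := fun l => hchild3 (G l) l.length
  have hdiamle : ∀ (x : ℕ → ℕ) (n : ℕ),
      EMetric.diam (A (PiNat.res x (n + 1))) ≤ ENNReal.ofReal ((1/2 : ℝ)^n) := by
    intro x n
    rw [PiNat.res_succ]
    have h2 : A (x n :: PiNat.res x n) = (child (G (PiNat.res x n)) (PiNat.res x n).length (x n)).1 := rfl
    rw [h2, PiNat.res_length]
    exact hchild4 (G (PiNat.res x n)) n (x n)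
  have hdiam : CantorScheme.VanishingDiam A := by
    intro x
    have hupper : Filter.Tendsto (fun n : ℕ => ENNReal.ofReal ((1/2 : ℝ)^n))
        Filter.atTop (nhds 0) := by
      have h0 : Filter.Tendsto (fun n : ℕ => ((1/2 : ℝ))^n) Filter.atTop (nhds 0) :=
        tendsto_pow_atTop_nhds_zero_of_lt_one (by norm_num) (by norm_num)
      have := (ENNReal.continuous_ofReal.tendsto 0).comp h0
      rw [ENNReal.ofReal_zero] at this
      exact this
    have h1 : Filter.Tendsto (fun n : ℕ => EMetric.diam (A (PiNat.res x (n + 1))))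
        Filter.atTop (nhds 0) :=
      tendsto_of_tendsto_of_tendsto_of_le_of_le tendsto_const_nhds hupper
        (fun n => zero_le) (fun n => hdiamle x n)
    exact (Filter.tendsto_add_atTop_iff_nat 1).1 h1
  -- the induced map is total
  have htot : (CantorScheme.inducedMap A).1 = univ :=
    hclanti.map_of_vanishingDiam hdiam hAne
  set f := (CantorScheme.inducedMap A).2 with hf
  have hmono : ∀ (w : ℕ → ℕ) {m n : ℕ}, m ≤ n → A (PiNat.res w n) ⊆ A (PiNat.res w m) := by
    intro w m n hmn
    have : Antitone fun k : ℕ => A (PiNat.res w k) := by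
      refine antitone_nat_of_succ_le fun k => ?_
      rw [PiNat.res_succ]
      exact hsub _ _
    exact this hmn
  -- extension lemma
  have hext : ∀ (z : ℕ → ℕ) (n : ℕ) (y : α), y ∈ A (PiNat.res z n) →
      ∃ x : ℕ → ℕ, PiNat.res x n = PiNat.res z n ∧ ∀ m, y ∈ A (PiNat.res x m) := by
    intro z n y hy
    have step : ∀ l : List ℕ, y ∈ A l → ∃ a, y ∈ A (a :: l) := by
      intro l hl
      have h1 : y ∈ ⋃ a, A (a :: l) := by rw [hcover l]; exact hl
      exact mem_iUnion.1 h1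
    set M : ℕ → {l : List ℕ // y ∈ A l} :=
      fun k => k.rec ⟨PiNat.res z n, hy⟩
        (fun _ ih => ⟨(step ih.1 ih.2).choose :: ih.1, (step ih.1 ih.2).choose_spec⟩)
      with hM
    have hMsucc : ∀ k, (M (k+1)).1 = (step (M k).1 (M k).2).choose :: (M k).1 := fun k => rfl
    set x : ℕ → ℕ := fun i => if i < n then z i else (M (i - n + 1)).1.headI with hx
    have hres : ∀ k, PiNat.res x (n + k) = (M k).1 := by
      intro k
      induction k with
      | zero =>
        show PiNat.res x n = PiNat.res z n
        exact PiNat.res_eq_res.2 fun m hm => if_pos hm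
      | succ k ih =>
        have h1 : n + (k + 1) = (n + k) + 1 := by ring
        rw [h1, PiNat.res_succ, ih, hMsucc]
        congr 1
        show (if n + k < n then z (n + k) else (M (n + k - n + 1)).1.headI) = _
        rw [if_neg (by omega)]
        have h2 : n + k - n = k := by omega
        rw [h2, hMsucc k]
        rfl
    refine ⟨x, ?_, ?_⟩
    · exact hres 0
    · intro m
      rcases le_or_gt n m with h | h
      · obtain ⟨k, rfl⟩ := Nat.exists_eq_add_of_le h
        rw [hres k]
        exact (M k).2
      · have h1 : PiNat.res x m = PiNat.res z m :=
          PiNat.res_eq_res.2 fun j hj => if_pos (hj.trans h)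
        rw [h1]
        exact hmono z h.le hy
  -- uniqueness of point in a branch
  have huniq : ∀ (q : (CantorScheme.inducedMap A).1) (y : α),
      (∀ m, y ∈ A (PiNat.res q.1 m)) → f q = y := by
    intro q y hy
    by_contra hne
    obtain ⟨m, hm⟩ := hdiam.dist_lt _ (dist_pos.2 hne) q.1
    exact absurd (hm _ (CantorScheme.map_mem q m) _ (hy m)) (lt_irrefl _)
  have hsurj : Function.Surjective f := by
    intro y
    obtain ⟨x, -, hx⟩ := hext (fun _ => 0) 0 y (by
      show y ∈ A (PiNat.res (fun _ => 0) 0)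
      rw [PiNat.res_zero]
      exact mem_univ y)
    have hxdom : x ∈ (CantorScheme.inducedMap A).1 := ⟨y, mem_iInter.2 hx⟩
    exact ⟨⟨x, hxdom⟩, huniq ⟨x, hxdom⟩ y hx⟩
  have hinj : Function.Injective f := hdisj.map_injective
  have hcont : Continuous f := hdiam.map_continuous
  -- openness
  have hopen : IsOpenMap f := by
    have hbasis : IsTopologicalBasis ((preimage (Subtype.val : (CantorScheme.inducedMap A).1 → ℕ → ℕ)) ''
        { s : Set (ℕ → ℕ) | ∃ (x : ℕ → ℕ) (n : ℕ), s = PiNat.cylinder x n }) :=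
      TopologicalSpace.IsTopologicalBasis.isInducing Topology.IsInducing.subtypeVal (PiNat.isTopologicalBasis_cylinders (E := fun _ => ℕ))
    refine hbasis.isOpenMap_iff.2 ?_
    rintro s ⟨-, ⟨z, m, rfl⟩, rfl⟩
    have himg : f '' (Subtype.val ⁻¹' PiNat.cylinder z m) = A (PiNat.res z m) := by
      apply subset_antisymm
      · rintro - ⟨q, hq, rfl⟩
        have h1 : PiNat.res q.1 m = PiNat.res z m := by
          have := hq
          rwa [mem_preimage, PiNat.cylinder_eq_res, mem_setOf_eq] at this
        rw [← h1]
        exact CantorScheme.map_mem q m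
      · intro y hy
        obtain ⟨x, hx1, hx2⟩ := hext z m y hy
        have hxdom : x ∈ (CantorScheme.inducedMap A).1 := ⟨y, mem_iInter.2 hx2⟩
        refine ⟨⟨x, hxdom⟩, ?_, huniq ⟨x, hxdom⟩ y hx2⟩
        rw [mem_preimage, PiNat.cylinder_eq_res, mem_setOf_eq]
        exact hx1
    rw [himg]
    exact (hAclopen _).isOpen
  -- assemble
  let e : (CantorScheme.inducedMap A).1 ≃ α := Equiv.ofBijective f ⟨hinj, hsurj⟩
  let h1 : (CantorScheme.inducedMap A).1 ≃ₜ α :=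
    Equiv.toHomeomorphOfContinuousOpen e (by exact hcont) (by exact hopen)
  exact ⟨h1.symm.trans ((Homeomorph.setCongr htot).trans (Homeomorph.Set.univ _))⟩

lemma aux_irrational : Nonempty ({x : ℝ // Irrational x} ≃ₜ (ℕ → ℕ)) := by
  have hS : IsGδ {x : ℝ | Irrational x} := IsGδ.setOf_irrational
  haveI hpol : PolishSpace {x : ℝ | Irrational x} :=
    aux_polish_of_isGδ hS ⟨((0:ℚ):ℝ), Rat.not_irrational 0⟩
  haveI hne : Nonempty {x : ℝ | Irrational x} := ⟨⟨_, irrational_sqrt_two⟩⟩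
  set Bs : Set (Set {x : ℝ | Irrational x}) :=
    (preimage (Subtype.val : {x : ℝ | Irrational x} → ℝ)) ''
      (⋃ (a : ℚ) (b : ℚ) (_ : a < b), {Ioo (a : ℝ) b}) with hBs
  have hbasis : IsTopologicalBasis Bs :=
    TopologicalSpace.IsTopologicalBasis.isInducing Topology.IsInducing.subtypeVal
      Real.isTopologicalBasis_Ioo_rat
  have hclopen : ∀ W ∈ Bs, IsClopen W := by
    rintro W ⟨s, hs, rfl⟩
    simp only [mem_iUnion, mem_singleton_iff] at hs
    obtain ⟨a, b, -, rfl⟩ := hs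
    constructor
    · have : (Subtype.val : {x : ℝ | Irrational x} → ℝ) ⁻¹' Ioo (a:ℝ) b
          = Subtype.val ⁻¹' Icc (a:ℝ) b := by
        ext x
        have hx : Irrational (x : ℝ) := x.2
        simp only [mem_preimage, mem_Ioo, mem_Icc]
        constructor
        · rintro ⟨h1, h2⟩; exact ⟨h1.le, h2.le⟩
        · rintro ⟨h1, h2⟩
          exact ⟨h1.lt_of_ne (Ne.symm (hx.ne_rat a)), h2.lt_of_ne (hx.ne_rat b)⟩
      rw [this]
      exact isClosed_Icc.preimage continuous_subtype_val
    · exact isOpen_Ioo.preimage continuous_subtype_val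
  have hnc : ∀ K : Set {x : ℝ | Irrational x}, IsCompact K → IsOpen K → K = ∅ := by
    intro K hK hKo
    by_contra h
    refine aux_nowhere_compact (J := (univ : Set ℝ)) (subset_univ _) ?_ ?_ hK hKo
      (nonempty_iff_ne_empty.2 h)
    · have : (univ : Set ℝ) \ {x : ℝ | Irrational x} = Set.range ((↑) : ℚ → ℝ) := by
        ext x
        simp [Irrational, not_not]
      rw [this]
      intro x _
      exact Rat.denseRange_cast x
    · intro x _
      exact dense_irrational x
  obtain ⟨e⟩ := aux_homeo_nat_nat {x : ℝ | Irrational x} hbasis hclopen hnc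
  exact ⟨e⟩

/-- A nonempty zero-dimensional `G_δ` subset `X` of `ℂ`, contained in a closed set `J` in
which both `X` and `J \ X` are dense, is homeomorphic to the space of irrational numbers. -/
theorem stmt_18 (X J : Set ℂ) (hX : IsGδ X) (hJ : IsClosed J) (hXJ : X ⊆ J)
    (hdense : J ⊆ closure X) (hcodense : J ⊆ closure (J \ X))
    (hne : X.Nonempty)
    (B : Set (Set X)) (hB : TopologicalSpace.IsTopologicalBasis B)
    (hclopen : ∀ U ∈ B, IsClopen U) :
    Nonempty ((X : Set ℂ) ≃ₜ {x : ℝ // Irrational x}) := by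
  -- the complement of `X` is nonempty
  have hJX : (J \ X).Nonempty := by
    obtain ⟨x, hx⟩ := hne
    have h1 : x ∈ closure (J \ X) := hcodense (hXJ hx)
    rcases eq_empty_or_nonempty (J \ X) with h | h
    · rw [h, closure_empty] at h1; exact absurd h1 (notMem_empty x)
    · exact h
  have hXc : Xᶜ.Nonempty := by
    obtain ⟨c, hc⟩ := hJX
    exact ⟨c, hc.2⟩
  haveI : PolishSpace X := aux_polish_of_isGδ hX hXc
  haveI : Nonempty X := hne.to_subtype
  have hnc : ∀ K : Set X, IsCompact K → IsOpen K → K = ∅ := by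
    intro K hK hKo
    by_contra h
    exact aux_nowhere_compact hXJ hcodense hdense hK hKo (nonempty_iff_ne_empty.2 h)
  obtain ⟨e₁⟩ := aux_homeo_nat_nat X hB hclopen hnc
  obtain ⟨e₂⟩ := aux_irrational
  exact ⟨e₁.trans e₂.symm⟩
end
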